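/- Let d be an integer. A simplicial complex K is (d−1)-representable if and only if its suspension susp K is d-representable. -/

import Mathlib

open Finset Pointwise Metric

/-- An (abstract, finite) simplicial complex: a set system closed under taking subsets. -/
def IsComplex {V : Type*} (K : Finset (Finset V)) : Prop :=
  ∀ σ ∈ K, ∀ τ ⊆ σ, τ ∈ K

/-- The suspension of `K`, with the two new apex vertices `Sum.inr true` and
`Sum.inr false`. -/
def susp {V : Type*} [DecidableEq V] (K : Finset (Finset V)) :
    Finset (Finset (V ⊕ Bool)) :=
  K.image (Finset.image Sum.inl) ∪
  K.image (fun σ => insert (Sum.inr true) (σ.image Sum.inl)) ∪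
  K.image (fun σ => insert (Sum.inr false) (σ.image Sum.inl))

/-- `K` is `d`-representable: it is the nerve of a family of convex sets in `ℝ^d`
indexed by its vertex set. -/
def Representable (d : ℕ) {V : Type*} (K : Finset (Finset V)) : Prop :=
  ∃ C : V → Set (Fin d → ℝ), (∀ v, Convex ℝ (C v)) ∧
    ∀ σ : Finset V, σ ∈ K ↔ (⋂ v ∈ σ, C v).Nonempty

section Helpers

open Finset Pointwise Metric

lemma sep_lemma {E : Type*} [NormedAddCommGroup E] [NormedSpace ℝ E]
    [FiniteDimensional ℝ E] [Nontrivial E]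
    {A B : Set E} (hA : Convex ℝ A) (hB : Convex ℝ B) (hAne : A.Nonempty)
    (hBne : B.Nonempty) (hdisj : A ∩ B = ∅) :
    ∃ f : E →L[ℝ] ℝ, f ≠ 0 ∧ ∀ a ∈ A, ∀ b ∈ B, f a ≤ f b := by
  classical
  set C : Set E := B - A with hC
  have hCconv : Convex ℝ C := hB.sub hA
  have h0 : (0 : E) ∉ C := by
    rintro ⟨b, hb, a, ha, hba⟩
    have : a = b := (sub_eq_zero.mp hba).symm
    have : a ∈ A ∩ B := ⟨ha, this ▸ hb⟩
    simp [hdisj] at this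
  -- compactness argument on the unit sphere of the dual
  have key : ∃ f : E →L[ℝ] ℝ, ‖f‖ = 1 ∧ ∀ x ∈ C, 0 ≤ f x := by
    have hcpt : IsCompact (sphere (0 : E →L[ℝ] ℝ) 1) := isCompact_sphere 0 1
    have hZc : ∀ x : C, IsClosed {f : E →L[ℝ] ℝ | 0 ≤ f (x : E)} := by
      intro x
      exact isClosed_le continuous_const ((ContinuousLinearMap.apply ℝ ℝ (x : E)).continuous)
    have hfin : ∀ u : Finset C,
        (sphere (0 : E →L[ℝ] ℝ) 1 ∩ ⋂ x ∈ u, {f : E →L[ℝ] ℝ | 0 ≤ f (x : E)}).Nonempty := by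
      intro u
      rcases u.eq_empty_or_nonempty with rfl | hu
      · obtain ⟨x, hx⟩ := exists_ne (0 : E)
        obtain ⟨g, hg1, -⟩ := exists_dual_vector ℝ x (norm_ne_zero_iff.mpr hx)
        exact ⟨g, by simpa [mem_sphere_zero_iff_norm] using hg1, by simp⟩
      · set T : Finset E := u.image Subtype.val with hT
        have hTC : (↑T : Set E) ⊆ C := by
          intro x hx
          simp only [hT, coe_image, Set.mem_image] at hx
          obtain ⟨y, -, rfl⟩ := hx
          exact y.2
        have hhullC : convexHull ℝ (↑T : Set E) ⊆ C := convexHull_min hTC hCconv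
        have h0hull : (0 : E) ∉ convexHull ℝ (↑T : Set E) := fun h => h0 (hhullC h)
        have hcl : IsClosed (convexHull ℝ (↑T : Set E)) :=
          (T.finite_toSet.isCompact_convexHull ℝ).isClosed
        obtain ⟨f, s, hfs, hfb⟩ :=
          geometric_hahn_banach_point_closed (convex_convexHull ℝ _) hcl h0hull
        have hf0 : (0 : ℝ) < s := by simpa using hfs
        obtain ⟨x₀, hx₀⟩ := hu
        have hx₀T : (x₀ : E) ∈ convexHull ℝ (↑T : Set E) :=
          subset_convexHull ℝ _ (by simp only [hT, coe_image, Set.mem_image]; exact ⟨x₀, hx₀, rfl⟩)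
        have hfne : f ≠ 0 := by
          intro h
          have := hfb _ hx₀T
          rw [h] at this
          simp at this
          linarith
        have hnf : ‖f‖ ≠ 0 := norm_ne_zero_iff.mpr hfne
        refine ⟨‖f‖⁻¹ • f, ?_, ?_⟩
        · rw [mem_sphere_zero_iff_norm]
          have : ‖‖f‖⁻¹ • f‖ = ‖f‖⁻¹ * ‖f‖ := by
            rw [norm_smul (‖f‖⁻¹) f, norm_inv, norm_norm]
          rw [this, inv_mul_cancel₀ hnf]
        · simp only [Set.mem_iInter]
          intro x hx
          have hxhull : (x : E) ∈ convexHull ℝ (↑T : Set E) :=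
            subset_convexHull ℝ _ (by simp only [hT, coe_image, Set.mem_image]; exact ⟨x, hx, rfl⟩)
          have := hfb _ hxhull
          have : (0:ℝ) ≤ f x := le_of_lt (lt_trans hf0 this)
          simpa using mul_nonneg (by positivity) this
    obtain ⟨f, hf1, hf2⟩ := hcpt.inter_iInter_nonempty _ hZc hfin
    refine ⟨f, by simpa [mem_sphere_zero_iff_norm] using hf1, ?_⟩
    intro x hx
    have := Set.mem_iInter.mp hf2 ⟨x, hx⟩
    simpa using this
  obtain ⟨f, hf1, hf2⟩ := key
  refine ⟨f, by simp [← norm_ne_zero_iff, hf1], ?_⟩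
  intro a ha b hb
  have : 0 ≤ f (b - a) := hf2 _ (Set.sub_mem_sub hb ha)
  simpa [map_sub] using this


section SuspLemmas

variable {V : Type*} [DecidableEq V] {K : Finset (Finset V)}

lemma mem_susp_iff {s : Finset (V ⊕ Bool)} :
    s ∈ susp K ↔ (∃ τ ∈ K, s = τ.image Sum.inl) ∨
      (∃ τ ∈ K, s = insert (Sum.inr true) (τ.image Sum.inl)) ∨
      (∃ τ ∈ K, s = insert (Sum.inr false) (τ.image Sum.inl)) := by
  simp only [susp, mem_union, mem_image, or_assoc]
  constructor
  · rintro (⟨τ, hτ, rfl⟩ | ⟨τ, hτ, rfl⟩ | ⟨τ, hτ, rfl⟩)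
    exacts [Or.inl ⟨τ, hτ, rfl⟩, Or.inr (Or.inl ⟨τ, hτ, rfl⟩), Or.inr (Or.inr ⟨τ, hτ, rfl⟩)]
  · rintro (⟨τ, hτ, rfl⟩ | ⟨τ, hτ, rfl⟩ | ⟨τ, hτ, rfl⟩)
    exacts [Or.inl ⟨τ, hτ, rfl⟩, Or.inr (Or.inl ⟨τ, hτ, rfl⟩), Or.inr (Or.inr ⟨τ, hτ, rfl⟩)]

lemma inr_not_mem_image_inl (b : Bool) (τ : Finset V) :
    Sum.inr b ∉ τ.image Sum.inl := by simp

lemma image_inl_mem_susp {τ : Finset V} (h : τ ∈ K) : τ.image Sum.inl ∈ susp K :=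
  mem_susp_iff.mpr (Or.inl ⟨τ, h, rfl⟩)

lemma insert_inr_mem_susp {τ : Finset V} (h : τ ∈ K) (b : Bool) :
    insert (Sum.inr b) (τ.image Sum.inl) ∈ susp K := by
  cases b
  · exact mem_susp_iff.mpr (Or.inr (Or.inr ⟨τ, h, rfl⟩))
  · exact mem_susp_iff.mpr (Or.inr (Or.inl ⟨τ, h, rfl⟩))

lemma mem_of_image_inl_mem_susp {τ : Finset V} (h : τ.image Sum.inl ∈ susp K) : τ ∈ K := by
  rcases mem_susp_iff.mp h with ⟨ρ, hρ, he⟩ | ⟨ρ, hρ, he⟩ | ⟨ρ, hρ, he⟩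
  · rwa [(Finset.image_injective Sum.inl_injective he.symm : ρ = τ)] at hρ
  · exact absurd (he ▸ mem_insert_self _ _) (inr_not_mem_image_inl true τ)
  · exact absurd (he ▸ mem_insert_self _ _) (inr_not_mem_image_inl false τ)

lemma not_both_inr_mem {s : Finset (V ⊕ Bool)} (h : s ∈ susp K)
    (ht : Sum.inr true ∈ s) (hf : Sum.inr false ∈ s) : False := by
  rcases mem_susp_iff.mp h with ⟨ρ, hρ, rfl⟩ | ⟨ρ, hρ, rfl⟩ | ⟨ρ, hρ, rfl⟩
  · exact inr_not_mem_image_inl true ρ ht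
  · rcases mem_insert.mp hf with h' | h'
    · simp at h'
    · exact inr_not_mem_image_inl false ρ h'
  · rcases mem_insert.mp ht with h' | h'
    · simp at h'
    · exact inr_not_mem_image_inl true ρ h'

lemma susp_decode_insert {s : Finset (V ⊕ Bool)} (h : s ∈ susp K) (b : Bool)
    (hb : Sum.inr b ∈ s) (hnb : Sum.inr (!b) ∉ s) :
    ∃ τ ∈ K, s = insert (Sum.inr b) (τ.image Sum.inl) := by
  rcases mem_susp_iff.mp h with ⟨ρ, hρ, rfl⟩ | ⟨ρ, hρ, rfl⟩ | ⟨ρ, hρ, rfl⟩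
  · exact absurd hb (inr_not_mem_image_inl b ρ)
  · cases b
    · simp at hb
    · exact ⟨ρ, hρ, rfl⟩
  · cases b
    · exact ⟨ρ, hρ, rfl⟩
    · simp at hb

lemma empty_mem_of_empty_mem_susp (h : (∅ : Finset (V ⊕ Bool)) ∈ susp K) :
    (∅ : Finset V) ∈ K := by
  rcases mem_susp_iff.mp h with ⟨ρ, hρ, he⟩ | ⟨ρ, hρ, he⟩ | ⟨ρ, hρ, he⟩
  · rw [eq_comm, Finset.image_eq_empty] at he; rwa [← he]
  · exact absurd he.symm (insert_ne_empty _ _)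
  · exact absurd he.symm (insert_ne_empty _ _)


end SuspLemmas

lemma backward (d : ℕ) (hd : 1 ≤ d) {V : Type*} [DecidableEq V]
    (K : Finset (Finset V)) (h : Representable d (susp K)) :
    Representable (d - 1) K := by
  classical
  obtain ⟨D, hDconv, hD⟩ := h
  haveI : Nonempty (Fin d) := ⟨⟨0, hd⟩⟩
  haveI : Nontrivial (Fin d → ℝ) := inferInstance
  -- the empty face
  have hKempty : (∅ : Finset V) ∈ K := by
    apply empty_mem_of_empty_mem_susp
    rw [hD]
    simp
  -- apex sets are nonempty
  have hane : (D (Sum.inr true)).Nonempty := by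
    have h1 : ({Sum.inr true} : Finset (V ⊕ Bool)) ∈ susp K := by
      simpa using insert_inr_mem_susp hKempty true
    have := (hD _).mp h1
    simpa using this
  have hbne : (D (Sum.inr false)).Nonempty := by
    have h1 : ({Sum.inr false} : Finset (V ⊕ Bool)) ∈ susp K := by
      simpa using insert_inr_mem_susp hKempty false
    have := (hD _).mp h1
    simpa using this
  -- apex sets are disjoint
  have hdisj : D (Sum.inr true) ∩ D (Sum.inr false) = ∅ := by
    have h1 : ({Sum.inr true, Sum.inr false} : Finset (V ⊕ Bool)) ∉ susp K := by
      intro h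
      exact not_both_inr_mem h (by simp) (by simp)
    rw [hD] at h1
    rw [← Set.not_nonempty_iff_eq_empty]
    intro hne
    apply h1
    obtain ⟨x, hx⟩ := hne
    exact ⟨x, by simpa using hx⟩
  -- separating functional
  obtain ⟨f, hfne, hsep⟩ := sep_lemma (hDconv _) (hDconv _) hane hbne hdisj
  obtain ⟨b₀, hb₀⟩ := hbne
  set c : ℝ := sSup (f '' D (Sum.inr true)) with hc
  have hbdd : BddAbove (f '' D (Sum.inr true)) := by
    refine ⟨f b₀, ?_⟩
    rintro y ⟨a, ha, rfl⟩
    exact hsep a ha b₀ hb₀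
  have hac : ∀ a ∈ D (Sum.inr true), f a ≤ c := fun a ha =>
    le_csSup hbdd (Set.mem_image_of_mem f ha)
  have hcb : ∀ b ∈ D (Sum.inr false), c ≤ f b := by
    intro b hb
    exact csSup_le (hane.image f) (by rintro y ⟨a, ha, rfl⟩; exact hsep a ha b hb)
  -- a point on the hyperplane and the kernel
  obtain ⟨u, hu⟩ : ∃ u, f u ≠ 0 := by
    by_contra h
    push_neg at h
    exact hfne (by ext x; simpa using h x)
  set x₀ : Fin d → ℝ := (c / f u) • u with hx₀
  have hfx₀ : f x₀ = c := by
    rw [hx₀, map_smul, smul_eq_mul, div_mul_cancel₀ _ hu]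
  set W := LinearMap.ker (f : (Fin d → ℝ) →ₗ[ℝ] ℝ) with hW
  have hWrank : Module.finrank ℝ W = d - 1 := by
    rw [hW]
    have hr := LinearMap.finrank_range_add_finrank_ker (f : (Fin d → ℝ) →ₗ[ℝ] ℝ)
    have hsurj : Function.Surjective (f : (Fin d → ℝ) →ₗ[ℝ] ℝ) := by
      intro r
      exact ⟨(r / f u) • u, by simp [map_smul, smul_eq_mul, div_mul_cancel₀ _ hu]⟩
    rw [LinearMap.range_eq_top.mpr hsurj, finrank_top, Module.finrank_self,
      Module.finrank_fin_fun] at hr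
    omega
  obtain ⟨e⟩ : Nonempty (W ≃ₗ[ℝ] (Fin (d - 1) → ℝ)) := by
    apply FiniteDimensional.nonempty_linearEquiv_of_finrank_eq
    rw [hWrank, Module.finrank_fin_fun]
  -- the representing family for K
  set C : V → Set (Fin (d - 1) → ℝ) :=
    fun v => {y | ((e.symm y : Fin d → ℝ) + x₀) ∈ D (Sum.inl v)} with hCdef
  have hCconv : ∀ v, Convex ℝ (C v) := by
    intro v y₁ hy₁ y₂ hy₂ a b ha hb hab
    have key : ((e.symm (a • y₁ + b • y₂) : Fin d → ℝ) + x₀)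
        = a • ((e.symm y₁ : Fin d → ℝ) + x₀) + b • ((e.symm y₂ : Fin d → ℝ) + x₀) := by
      rw [map_add, map_smul, map_smul]
      funext i
      simp only [Pi.add_apply, Pi.smul_apply, Submodule.coe_add, Submodule.coe_smul,
        smul_eq_mul]
      linear_combination (-(x₀ i)) * hab
    show _ ∈ D (Sum.inl v)
    rw [key]
    exact hDconv _ hy₁ hy₂ ha hb hab
  -- the key characterization of intersections
  have hkey : ∀ σ : Finset V, (⋂ v ∈ σ, C v).Nonempty ↔
      ∃ x : Fin d → ℝ, f x = c ∧ ∀ v ∈ σ, x ∈ D (Sum.inl v) := by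
    intro σ
    constructor
    · rintro ⟨y, hy⟩
      refine ⟨(e.symm y : Fin d → ℝ) + x₀, ?_, ?_⟩
      · rw [map_add, hfx₀]
        have : f (e.symm y : Fin d → ℝ) = 0 := (e.symm y).2
        rw [this, zero_add]
      · intro v hv
        exact Set.mem_iInter₂.mp hy v hv
    · rintro ⟨x, hfx, hx⟩
      have hker : x - x₀ ∈ W := by
        simp only [hW, LinearMap.mem_ker]
        show f (x - x₀) = 0
        rw [map_sub, hfx, hfx₀, sub_self]
      refine ⟨e ⟨x - x₀, hker⟩, Set.mem_iInter₂.mpr fun v hv => ?_⟩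
      show ((e.symm (e ⟨x - x₀, hker⟩) : Fin d → ℝ) + x₀) ∈ D (Sum.inl v)
      rw [e.symm_apply_apply]
      simpa using hx v hv
  refine ⟨C, hCconv, fun σ => ?_⟩
  rw [hkey σ]
  constructor
  · intro hσ
    -- get points in the intersections with the two apexes
    obtain ⟨x, hx⟩ := (hD _).mp (insert_inr_mem_susp hσ true)
    obtain ⟨y, hy⟩ := (hD _).mp (insert_inr_mem_susp hσ false)
    have hxa : x ∈ D (Sum.inr true) :=
      Set.mem_iInter₂.mp hx _ (mem_insert_self _ _)
    have hyb : y ∈ D (Sum.inr false) :=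
      Set.mem_iInter₂.mp hy _ (mem_insert_self _ _)
    have hxv : ∀ v ∈ σ, x ∈ D (Sum.inl v) := fun v hv =>
      Set.mem_iInter₂.mp hx _ (mem_insert_of_mem (mem_image_of_mem _ hv))
    have hyv : ∀ v ∈ σ, y ∈ D (Sum.inl v) := fun v hv =>
      Set.mem_iInter₂.mp hy _ (mem_insert_of_mem (mem_image_of_mem _ hv))
    -- intermediate value theorem along the segment
    set g : ℝ → ℝ := fun t => f ((1 - t) • x + t • y) with hg
    have hgc : Continuous g := by
      apply f.continuous.comp
      exact ((continuous_const.sub continuous_id).smul continuous_const).add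
        (continuous_id.smul continuous_const)
    have hg0 : g 0 = f x := by simp [hg]
    have hg1 : g 1 = f y := by simp [hg]
    have hmem : c ∈ Set.Icc (g 0) (g 1) := by
      rw [hg0, hg1]
      exact ⟨hac x hxa, hcb y hyb⟩
    obtain ⟨t, ht, hgt⟩ := intermediate_value_Icc (by norm_num : (0:ℝ) ≤ 1)
      hgc.continuousOn hmem
    refine ⟨(1 - t) • x + t • y, hgt, fun v hv => ?_⟩
    exact hDconv _ (hxv v hv) (hyv v hv) (by linarith [ht.2]) ht.1 (by ring)
  · rintro ⟨x, hfx, hx⟩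
    apply mem_of_image_inl_mem_susp
    rw [hD]
    refine ⟨x, Set.mem_iInter₂.mpr fun u hu => ?_⟩
    obtain ⟨v, hv, rfl⟩ := Finset.mem_image.mp hu
    exact hx v hv


lemma forward (d : ℕ) (hd : 1 ≤ d) {V : Type*} [DecidableEq V]
    (K : Finset (Finset V)) (h : Representable (d - 1) K) :
    Representable d (susp K) := by
  classical
  obtain ⟨C, hCconv, hC⟩ := h
  set j : Fin d := ⟨d - 1, by omega⟩ with hj
  set proj : (Fin d → ℝ) → (Fin (d - 1) → ℝ) :=
    fun x i => x (Fin.castLE (Nat.sub_le d 1) i) with hprojdef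
  set lift : (Fin (d - 1) → ℝ) → ℝ → (Fin d → ℝ) :=
    fun y t i => if h : (i : ℕ) < d - 1 then y ⟨i, h⟩ else t with hliftdef
  have hproj_lift : ∀ y t, proj (lift y t) = y := by
    intro y t
    funext i
    have hi : ((Fin.castLE (Nat.sub_le d 1) i : Fin d) : ℕ) < d - 1 := i.2
    simp only [hprojdef, hliftdef, hi, dif_pos]
    exact congrArg y (Fin.ext rfl)
  have hlift_j : ∀ y t, lift y t j = t := by
    intro y t
    simp only [hliftdef, hj]
    rw [dif_neg (by omega)]
  set D : (V ⊕ Bool) → Set (Fin d → ℝ) := fun u =>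
    Sum.elim (fun v => {x | proj x ∈ C v})
      (fun bb => {x : Fin d → ℝ | x j = if bb then 1 else -1}) u with hDdef
  have hproj_lin : ∀ (a b : ℝ) (x y : Fin d → ℝ),
      proj (a • x + b • y) = a • proj x + b • proj y := by
    intro a b x y
    funext i
    simp [hprojdef]
  refine ⟨D, ?_, ?_⟩
  · rintro (v | bb)
    · intro x hx y hy a b ha hb hab
      show proj (a • x + b • y) ∈ C v
      rw [hproj_lin]
      exact hCconv v hx hy ha hb hab
    · intro x hx y hy a b ha hb hab
      show (a • x + b • y) j = _
      have hx' : x j = if bb then 1 else -1 := hx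
      have hy' : y j = if bb then 1 else -1 := hy
      simp only [Pi.add_apply, Pi.smul_apply, smul_eq_mul, hx', hy']
      rcases bb with _ | _ <;> simp <;> linarith
  · intro s
    set T : Finset V := s.preimage Sum.inl Sum.inl_injective.injOn with hTdef
    have hT : ∀ v, v ∈ T ↔ Sum.inl v ∈ s := fun v => Finset.mem_preimage
    by_cases h1 : Sum.inr true ∈ s <;> by_cases h2 : Sum.inr false ∈ s
    · -- both apexes: both sides false
      constructor
      · intro h
        exact absurd (not_both_inr_mem h h1 h2) (by simp)
      · rintro ⟨x, hx⟩
        have hx1 : x j = (1 : ℝ) := by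
          have := Set.mem_iInter₂.mp hx _ h1
          simpa [hDdef] using this
        have hx2 : x j = (-1 : ℝ) := by
          have := Set.mem_iInter₂.mp hx _ h2
          simpa [hDdef] using this
        rw [hx1] at hx2
        norm_num at hx2
    · -- only inr true
      have hs_eq : s = insert (Sum.inr true) (T.image Sum.inl) := by
        ext (v | bb)
        · simp [Finset.mem_insert, Finset.mem_image, hT v]
        · rcases bb with _ | _
          · simp [Finset.mem_insert, Finset.mem_image, h2]
          · simp [Finset.mem_insert, Finset.mem_image, h1]
      have left_iff : s ∈ susp K ↔ T ∈ K := by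
        constructor
        · intro h
          obtain ⟨τ, hτ, he⟩ := susp_decode_insert h true h1 (by simpa using h2)
          have : T = τ := by
            ext v
            rw [hT v, he]
            simp
          rwa [this]
        · intro h
          rw [hs_eq]
          exact insert_inr_mem_susp h true
      rw [left_iff, hC T]
      constructor
      · rintro ⟨y, hy⟩
        refine ⟨lift y 1, Set.mem_iInter₂.mpr fun u hu => ?_⟩
        rw [hs_eq] at hu
        rcases Finset.mem_insert.mp hu with rfl | hu'
        · show lift y 1 ∈ {x : Fin d → ℝ | x j = if true then 1 else -1}
          simp [hlift_j]
        · obtain ⟨v, hv, rfl⟩ := Finset.mem_image.mp hu'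
          show proj (lift y 1) ∈ C v
          rw [hproj_lift]
          exact Set.mem_iInter₂.mp hy v hv
      · rintro ⟨x, hx⟩
        refine ⟨proj x, Set.mem_iInter₂.mpr fun v hv => ?_⟩
        exact Set.mem_iInter₂.mp hx _ ((hT v).mp hv)
    · -- only inr false
      have hs_eq : s = insert (Sum.inr false) (T.image Sum.inl) := by
        ext (v | bb)
        · simp [Finset.mem_insert, Finset.mem_image, hT v]
        · rcases bb with _ | _
          · simp [Finset.mem_insert, Finset.mem_image, h2]
          · simp [Finset.mem_insert, Finset.mem_image, h1]
      have left_iff : s ∈ susp K ↔ T ∈ K := by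
        constructor
        · intro h
          obtain ⟨τ, hτ, he⟩ := susp_decode_insert h false h2 (by simpa using h1)
          have : T = τ := by
            ext v
            rw [hT v, he]
            simp
          rwa [this]
        · intro h
          rw [hs_eq]
          exact insert_inr_mem_susp h false
      rw [left_iff, hC T]
      constructor
      · rintro ⟨y, hy⟩
        refine ⟨lift y (-1), Set.mem_iInter₂.mpr fun u hu => ?_⟩
        rw [hs_eq] at hu
        rcases Finset.mem_insert.mp hu with rfl | hu'
        · show lift y (-1) ∈ {x : Fin d → ℝ | x j = if false then 1 else -1}
          simp [hlift_j]
        · obtain ⟨v, hv, rfl⟩ := Finset.mem_image.mp hu'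
          show proj (lift y (-1)) ∈ C v
          rw [hproj_lift]
          exact Set.mem_iInter₂.mp hy v hv
      · rintro ⟨x, hx⟩
        refine ⟨proj x, Set.mem_iInter₂.mpr fun v hv => ?_⟩
        exact Set.mem_iInter₂.mp hx _ ((hT v).mp hv)
    · -- no apex
      have hs_eq : s = T.image Sum.inl := by
        ext (v | bb)
        · simp [Finset.mem_image, hT v]
        · rcases bb with _ | _
          · simp [Finset.mem_image, h2]
          · simp [Finset.mem_image, h1]
      have left_iff : s ∈ susp K ↔ T ∈ K := by
        constructor
        · intro h
          rw [hs_eq] at h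
          exact mem_of_image_inl_mem_susp h
        · intro h
          rw [hs_eq]
          exact image_inl_mem_susp h
      rw [left_iff, hC T]
      constructor
      · rintro ⟨y, hy⟩
        refine ⟨lift y 0, Set.mem_iInter₂.mpr fun u hu => ?_⟩
        rw [hs_eq] at hu
        obtain ⟨v, hv, rfl⟩ := Finset.mem_image.mp hu
        show proj (lift y 0) ∈ C v
        rw [hproj_lift]
        exact Set.mem_iInter₂.mp hy v hv
      · rintro ⟨x, hx⟩
        refine ⟨proj x, Set.mem_iInter₂.mpr fun v hv => ?_⟩
        exact Set.mem_iInter₂.mp hx _ ((hT v).mp hv)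


end Helpers

/-- A simplicial complex `K` is `(d-1)`-representable iff its suspension is
`d`-representable. -/
theorem stmt14 (d : ℕ) (hd : 1 ≤ d) {V : Type*} [DecidableEq V]
    (K : Finset (Finset V)) (hK : IsComplex K) :
    Representable (d - 1) K ↔ Representable d (susp K) :=
  ⟨forward d hd K, backward d hd K⟩
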